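/- Fix N ≥ 1, K ≥ 2, parameters θ₁ > θ₂ > … > θ_K > 0, and cumulative probabilities 0 = P₀ < P₁ < … < P_K = 1. For m ∈ {1,…,N} define α_m = (1/(N+1))·[1/θ_K − Σ_{k=1}^{K-1} (H^{N+1}_{≥ m}(P_k) + (N−m)·H^{N+1}_m(P_k))·(1/θ_{k+1} − 1/θ_k)], where H^{N+1}_j(t) = C(N+1,j) t^j (1-t)^{N+1-j} and H^{N+1}_{≥ m}(t) = Σ_{j=m}^{N+1} H^{N+1}_j(t). Then for every m' ∈ {1,…,N−1}, α_N − α_{m'} > 0. -/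

import Mathlib

open Set

/-- `H N m t = C(N,m) t^m (1-t)^(N-m)`. -/
noncomputable def H (N m : ℕ) (t : ℝ) : ℝ := (N.choose m : ℝ) * t ^ m * (1 - t) ^ (N - m)

/-- Upper tail `H^{N}_{≥ m}(t) = Σ_{j=m}^{N} H N j t`. -/
noncomputable def Hge (N m : ℕ) (t : ℝ) : ℝ := ∑ j ∈ Finset.Icc m N, H N j t

/-- The coefficient of prize `m` in the expected-effort formula under linear costs. -/
noncomputable def alpha (N K : ℕ) (θ P : ℕ → ℝ) (m : ℕ) : ℝ :=
  (1 / (N + 1)) * (1 / θ K - ∑ k ∈ Finset.Icc 1 (K - 1),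
    (Hge (N + 1) m (P k) + ((N : ℝ) - m) * H (N + 1) m (P k)) * (1 / θ (k + 1) - 1 / θ k))

lemma H_pos {N m : ℕ} {t : ℝ} (hm : m ≤ N) (ht0 : 0 < t) (ht1 : t < 1) :
    0 < H N m t := by
  have h1 : (0:ℝ) < (N.choose m : ℝ) := by
    exact_mod_cast Nat.choose_pos hm
  have h2 : (0:ℝ) < t ^ m := pow_pos ht0 m
  have h3 : (0:ℝ) < (1 - t) ^ (N - m) := pow_pos (by linarith) _
  unfold H
  positivity

theorem winner_takes_all_optimal (N K : ℕ) (hN : 1 ≤ N) (hK : 2 ≤ K)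
    (θ P : ℕ → ℝ)
    (hθdec : ∀ k, 1 ≤ k → k < K → θ (k + 1) < θ k)
    (hθpos : 0 < θ K)
    (hP0 : P 0 = 0) (hPK : P K = 1)
    (hPmono : ∀ k, k < K → P k < P (k + 1))
    (m' : ℕ) (hm'1 : 1 ≤ m') (hm' : m' ≤ N - 1) :
    0 < alpha N K θ P N - alpha N K θ P m' := by
  have hm'N : m' < N := by omega
  -- P is strictly increasing up to K
  have hPlt : ∀ a b, a < b → b ≤ K → P a < P b := by
    intro a b
    induction b with
    | zero => omega
    | succ n ih =>
      intro hab hbK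
      rcases Nat.lt_or_ge a n with h | h
      · exact lt_trans (ih h (by omega)) (hPmono n (by omega))
      · have : a = n := by omega
        subst this
        exact hPmono a (by omega)
  have hPin : ∀ k, 1 ≤ k → k ≤ K - 1 → 0 < P k ∧ P k < 1 := by
    intro k h1 h2
    constructor
    · rw [← hP0]; exact hPlt 0 k (by omega) (by omega)
    · rw [← hPK]; exact hPlt k K (by omega) le_rfl
  -- θ is positive on 1..K
  have hθge : ∀ j k, 1 ≤ k → k + j ≤ K → θ (k + j) ≤ θ k := by
    intro j
    induction j with
    | zero => intro k _ _; simp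
    | succ n ih =>
      intro k h1 h2
      have := hθdec (k + n) (by omega) (by omega)
      calc θ (k + (n+1)) = θ ((k+n) + 1) := by ring_nf
        _ ≤ θ (k + n) := le_of_lt this
        _ ≤ θ k := ih k h1 (by omega)
  have hθpos' : ∀ k, 1 ≤ k → k ≤ K → 0 < θ k := by
    intro k h1 h2
    have := hθge (K - k) k h1 (by omega)
    have hkk : k + (K - k) = K := by omega
    rw [hkk] at this
    linarith
  -- rewrite the difference
  have key : alpha N K θ P N - alpha N K θ P m'
      = (1/(N+1:ℝ)) * ∑ k ∈ Finset.Icc 1 (K-1),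
        (((Hge (N+1) m' (P k) + ((N:ℝ) - m') * H (N+1) m' (P k))
          - (Hge (N+1) N (P k) + ((N:ℝ) - N) * H (N+1) N (P k)))
          * (1/θ (k+1) - 1/θ k)) := by
    simp only [alpha, sub_mul, Finset.sum_sub_distrib]
    ring
  rw [key]
  apply mul_pos (by positivity)
  apply Finset.sum_pos
  · intro k hk
    rw [Finset.mem_Icc] at hk
    obtain ⟨hP0k, hP1k⟩ := hPin k hk.1 hk.2
    apply mul_pos
    · -- pointwise positivity of coefficient difference
      have hNN : ((N:ℝ) - N) = 0 := by ring
      rw [hNN, zero_mul, add_zero]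
      have hsplit : Hge (N+1) m' (P k) - Hge (N+1) N (P k)
          = ∑ j ∈ Finset.Ico m' N, H (N+1) j (P k) := by
        unfold Hge
        rw [← Finset.Ico_add_one_right_eq_Icc m' (N+1), ← Finset.Ico_add_one_right_eq_Icc N (N+1)]
        rw [sub_eq_iff_eq_add, ← Finset.sum_Ico_consecutive _ (le_of_lt hm'N) (show N ≤ N + 1 + 1 by omega)]
      have hsum : 0 < ∑ j ∈ Finset.Ico m' N, H (N+1) j (P k) := by
        apply Finset.sum_pos
        · intro j hj
          rw [Finset.mem_Ico] at hj
          exact H_pos (by omega) hP0k hP1k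
        · exact ⟨m', Finset.mem_Ico.mpr ⟨le_rfl, hm'N⟩⟩
      have hnn : 0 ≤ ((N:ℝ) - m') * H (N+1) m' (P k) := by
        apply mul_nonneg
        · have : (m':ℝ) ≤ (N:ℝ) := by exact_mod_cast le_of_lt hm'N
          linarith
        · exact le_of_lt (H_pos (by omega) hP0k hP1k)
      linarith
    · -- 1/θ(k+1) - 1/θ k > 0
      have h1 : 0 < θ (k+1) := hθpos' (k+1) (by omega) (by omega)
      have h2 : θ (k+1) < θ k := hθdec k hk.1 (by omega)
      have := one_div_lt_one_div_of_lt h1 h2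
      linarith
  · exact ⟨1, Finset.mem_Icc.mpr ⟨le_rfl, by omega⟩⟩
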